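/- If k is algebraically closed, then S_λ = k^* for every λ ∈ R − k; that is, for every c ∈ k^* there exists σ ∈ Aut_k(R) with σ(λ) = cλ. -/

import Mathlib

theorem scaling_full_of_algebraically_closed
    (k R : Type*) [Field k] [IsAlgClosed k] [CommRing R] [IsDomain R]
    [IsNoetherianRing R] [Infinite R] [Algebra k R]
    (hinj : Function.Injective (algebraMap k R))
    (horb : ∃ s : Finset R, ∀ x : R, x ∉ Set.range (algebraMap k R) →
      ∃ y ∈ s, ∃ σ : R ≃ₐ[k] R, σ y = x) :
    ∀ lam : R, lam ∉ Set.range (algebraMap k R) → ∀ c : k, c ≠ 0 →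
      ∃ σ : R ≃ₐ[k] R, σ lam = algebraMap k R c * lam := by
  obtain ⟨s, hs⟩ := horb
  intro lam hlam c hc
  have halg : ∀ a : k, a ≠ 0 → (algebraMap k R a : R) ≠ 0 := by
    intro a ha h
    exact ha (hinj (by simpa using h))
  -- the subgroup of scaling factors
  set S : Subgroup kˣ :=
    { carrier := {a : kˣ | ∃ σ : R ≃ₐ[k] R, σ lam = algebraMap k R (a : k) * lam}
      one_mem' := ⟨AlgEquiv.refl, by simp⟩
      mul_mem' := by
        rintro a b ⟨σ, hσ⟩ ⟨τ, hτ⟩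
        refine ⟨σ.trans τ, ?_⟩
        have : τ (σ lam) = algebraMap k R ((a : k)) * (algebraMap k R (b : k) * lam) := by
          rw [hσ, map_mul, τ.commutes, hτ]
        simpa [Units.val_mul, map_mul, mul_assoc] using this
      inv_mem' := by
        rintro a ⟨σ, hσ⟩
        refine ⟨σ.symm, ?_⟩
        have h1 : lam = algebraMap k R ((a : k)) * σ.symm lam := by
          conv_lhs => rw [← σ.symm_apply_apply lam, hσ, map_mul, σ.symm.commutes]
        have h2 : algebraMap k R ((a : k)) * σ.symm lam
            = algebraMap k R ((a : k)) * (algebraMap k R ((a⁻¹ : kˣ) : k) * lam) := by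
          rw [← h1, ← mul_assoc, ← map_mul]
          simp
        exact mul_left_cancel₀ (halg _ a.ne_zero) h2 } with hSdef
  have hmemS : ∀ a : kˣ, a ∈ S ↔ ∃ σ : R ≃ₐ[k] R,
      σ lam = algebraMap k R (a : k) * lam := fun a => Iff.rfl
  -- each a * lam is outside k
  have hout : ∀ a : kˣ, (algebraMap k R (a : k)) * lam ∉ Set.range (algebraMap k R) := by
    rintro a ⟨d, hd⟩
    refine hlam ⟨(a⁻¹ : kˣ) * d, ?_⟩
    rw [map_mul, hd, ← mul_assoc, ← map_mul]
    simp [inv_mul_cancel₀ a.ne_zero]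
  have key : ∀ a : kˣ, ∃ y ∈ s, ∃ σ : R ≃ₐ[k] R,
      σ y = algebraMap k R (a : k) * lam := fun a => hs _ (hout a)
  choose f hf σf hσf using key
  -- same target implies same coset
  have hrel : ∀ a b : kˣ, f a = f b → a⁻¹ * b ∈ S := by
    intro a b hab
    refine ⟨(σf a).symm.trans (σf b), ?_⟩
    have h1 : f a = algebraMap k R ((a : k)) * (σf a).symm lam := by
      conv_lhs => rw [← (σf a).symm_apply_apply (f a), hσf a, map_mul, (σf a).symm.commutes]
    have h2 : (σf b) (f a) = algebraMap k R ((a : k)) * (σf b) ((σf a).symm lam) := by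
      conv_lhs => rw [h1]
      rw [map_mul, (σf b).commutes]
    rw [hab, hσf b] at h2
    have h3 : algebraMap k R ((a : k)) * (σf b) ((σf a).symm lam)
        = algebraMap k R ((a : k)) * (algebraMap k R (((a⁻¹ * b : kˣ)) : k) * lam) := by
      rw [← h2, ← mul_assoc, ← map_mul]
      congr 2
      simp [Units.val_mul, mul_inv_cancel_left₀ a.ne_zero]
    have := mul_left_cancel₀ (halg _ a.ne_zero) h3
    simpa using this
  -- finiteness of the quotient
  have hfin : Finite (kˣ ⧸ S) := by
    have : Function.Injective (fun q : kˣ ⧸ S => (⟨f q.out, hf q.out⟩ : {y // y ∈ s})) := by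
      intro q1 q2 h
      have hq : f q1.out = f q2.out := congrArg Subtype.val h
      have := hrel _ _ hq
      calc q1 = QuotientGroup.mk q1.out := (QuotientGroup.out_eq' q1).symm
        _ = QuotientGroup.mk q2.out := (QuotientGroup.eq).2 this
        _ = q2 := QuotientGroup.out_eq' q2
    exact Finite.of_injective _ this
  haveI := hfin
  haveI : S.FiniteIndex := Subgroup.finiteIndex_of_finite_quotient
  have hn : S.index ≠ 0 := Subgroup.FiniteIndex.index_ne_zero
  obtain ⟨z, hz⟩ := IsAlgClosed.exists_pow_nat_eq c (Nat.pos_of_ne_zero hn)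
  have hz0 : z ≠ 0 := by
    rintro rfl
    exact hc (by simpa [zero_pow hn] using hz.symm)
  have hu : (Units.mk0 z hz0) ^ S.index ∈ S := Subgroup.pow_index_mem S _
  obtain ⟨σ, hσ⟩ := (hmemS _).1 hu
  refine ⟨σ, ?_⟩
  rw [hσ]
  congr 1
  simp [← hz]
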